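/- For the n-cycle C_n with 4 | n, there exists a deterministic symmetric single-step strategy f : ℤ/nℤ → ℤ/nℤ with f(x) ∈ {x−1, x+1} such that the two-agent rendezvous success probability (1/n²)·∑_a |f⁻¹(a)|² equals 2/n, i.e., ∑_a |f⁻¹(a)|² = 2n, which is the maximum possible since every fiber has size at most 2. -/

import Mathlib

/-- The fiber size of `f` over `a`. -/
def fiberCard {V : Type} [Fintype V] [DecidableEq V] (f : V → V) (a : V) : ℕ :=
  (Finset.univ.filter (fun x => f x = a)).card

theorem stmt_6 (n : ℕ) [NeZero n] (hn : 4 ∣ n) :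
    ∃ f : ZMod n → ZMod n,
      (∀ x, f x = x - 1 ∨ f x = x + 1) ∧
      (∑ a : ZMod n, fiberCard f a ^ 2) = 2 * n ∧
      (∑ a : ZMod n, (fiberCard f a : ℝ) ^ 2) / (n : ℝ) ^ 2 = 2 / (n : ℝ) ∧
      ∀ g : ZMod n → ZMod n, (∀ x, g x = x - 1 ∨ g x = x + 1) →
        (∑ a : ZMod n, fiberCard g a ^ 2) ≤ 2 * n := by
  have hn0 : n ≠ 0 := NeZero.ne n
  have h4 : 4 ≤ n := Nat.le_of_dvd (Nat.pos_of_ne_zero hn0) hn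
  haveI : Fact (1 < n) := ⟨by omega⟩
  have h2 : (2 : ZMod n) ≠ 0 := by
    intro h
    have h' : ((2 : ℕ) : ZMod n) = 0 := by exact_mod_cast h
    rw [ZMod.natCast_eq_zero_iff] at h'
    have := Nat.le_of_dvd (by norm_num) h'
    omega
  -- fibers of any valid strategy are contained in {a+1, a-1}
  have fiber_subset : ∀ g : ZMod n → ZMod n, (∀ x, g x = x - 1 ∨ g x = x + 1) →
      ∀ a : ZMod n, (Finset.univ.filter (fun x => g x = a)) ⊆ {a + 1, a - 1} := by
    intro g hg a x hx
    simp only [Finset.mem_filter, Finset.mem_univ, true_and] at hx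
    rcases hg x with h | h
    · rw [h] at hx
      simp only [Finset.mem_insert, Finset.mem_singleton]
      left; rw [← hx]; ring
    · rw [h] at hx
      simp only [Finset.mem_insert, Finset.mem_singleton]
      right; rw [← hx]; ring
  have hne : ∀ a : ZMod n, a + 1 ≠ a - 1 := by
    intro a h
    apply h2
    have : a + 1 - (a - 1) = 0 := by rw [h]; ring
    calc (2 : ZMod n) = a + 1 - (a - 1) := by ring
    _ = 0 := this
  have card_le : ∀ g : ZMod n → ZMod n, (∀ x, g x = x - 1 ∨ g x = x + 1) →
      ∀ a : ZMod n, fiberCard g a ≤ 2 := by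
    intro g hg a
    have := Finset.card_le_card (fiber_subset g hg a)
    calc fiberCard g a ≤ ({a + 1, a - 1} : Finset (ZMod n)).card := this
    _ ≤ 2 := Finset.card_insert_le _ _ |>.trans (by simp)
  have sum_fiber : ∀ g : ZMod n → ZMod n, ∑ a : ZMod n, fiberCard g a = n := by
    intro g
    have h := Finset.card_eq_sum_card_fiberwise
      (s := (Finset.univ : Finset (ZMod n))) (t := Finset.univ) (f := g)
      (fun x _ => Finset.mem_univ _)
    have hcard : (Finset.univ : Finset (ZMod n)).card = n := by
      simp [Finset.card_univ, ZMod.card]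
    rw [hcard] at h
    exact h.symm
  have bound : ∀ g : ZMod n → ZMod n, (∀ x, g x = x - 1 ∨ g x = x + 1) →
      (∑ a : ZMod n, fiberCard g a ^ 2) ≤ 2 * n := by
    intro g hg
    calc ∑ a : ZMod n, fiberCard g a ^ 2 ≤ ∑ a : ZMod n, 2 * fiberCard g a := by
          apply Finset.sum_le_sum
          intro a _
          have := card_le g hg a
          nlinarith [card_le g hg a]
    _ = 2 * ∑ a : ZMod n, fiberCard g a := by rw [Finset.mul_sum]
    _ = 2 * n := by rw [sum_fiber g]
  -- the strategy
  set f : ZMod n → ZMod n := fun x => if x.val % 4 < 2 then x + 1 else x - 1 with hf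
  have hprop : ∀ x : ZMod n, f x = x - 1 ∨ f x = x + 1 := by
    intro x
    by_cases h : x.val % 4 < 2
    · right; simp only [hf, if_pos h]
    · left; simp only [hf, if_neg h]
  -- val mod 4 computations
  have vadd1 : ∀ x : ZMod n, (x + 1).val % 4 = (x.val + 1) % 4 := by
    intro x
    rw [ZMod.val_add, ZMod.val_one, Nat.mod_mod_of_dvd _ hn]
  have hm1 : ∀ a : ZMod n, f (a - 1) = a ↔ (a - 1).val % 4 < 2 := by
    intro a
    constructor
    · intro h
      by_contra hc
      rw [hf] at h
      simp only [if_neg hc] at h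
      have : a - 1 - 1 = a - 2 := by ring
      rw [this] at h
      apply h2
      calc (2 : ZMod n) = a - (a - 2) := by ring
      _ = 0 := by rw [h]; ring
    · intro h
      rw [hf]; simp only [if_pos h]; ring
  have hm2 : ∀ a : ZMod n, f (a + 1) = a ↔ ¬ ((a + 1).val % 4 < 2) := by
    intro a
    constructor
    · intro h hc
      rw [hf] at h
      simp only [if_pos hc] at h
      apply h2
      calc (2 : ZMod n) = (a + 1 + 1) - a := by ring
      _ = 0 := by rw [h]; ring
    · intro h
      rw [hf]; simp only [if_neg h]; ring
  have key : ∀ a : ZMod n, ((a - 1).val % 4 < 2 ↔ ¬ ((a + 1).val % 4 < 2)) := by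
    intro a
    have h1 := vadd1 (a - 1)
    rw [sub_add_cancel] at h1
    have h2' := vadd1 a
    omega
  have fib02 : ∀ a : ZMod n, fiberCard f a = 0 ∨ fiberCard f a = 2 := by
    intro a
    by_cases h : (a - 1).val % 4 < 2
    · right
      have hsub := fiber_subset f hprop a
      have hmem1 : (a - 1) ∈ Finset.univ.filter (fun x => f x = a) := by
        simp only [Finset.mem_filter, Finset.mem_univ, true_and]
        exact (hm1 a).mpr h
      have hmem2 : (a + 1) ∈ Finset.univ.filter (fun x => f x = a) := by
        simp only [Finset.mem_filter, Finset.mem_univ, true_and]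
        exact (hm2 a).mpr ((key a).mp h)
      have heq : Finset.univ.filter (fun x => f x = a) = {a + 1, a - 1} := by
        apply Finset.Subset.antisymm hsub
        intro x hx
        simp only [Finset.mem_insert, Finset.mem_singleton] at hx
        rcases hx with rfl | rfl
        · exact hmem2
        · exact hmem1
      rw [fiberCard, heq, Finset.card_insert_of_notMem (by simpa using hne a),
        Finset.card_singleton]
    · left
      have heq : Finset.univ.filter (fun x => f x = a) = ∅ := by
        rw [Finset.eq_empty_iff_forall_notMem]
        intro x hx
        have hx' := fiber_subset f hprop a hx
        simp only [Finset.mem_filter, Finset.mem_univ, true_and] at hx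
        simp only [Finset.mem_insert, Finset.mem_singleton] at hx'
        rcases hx' with rfl | rfl
        · exact h ((key a).mpr ((hm2 a).mp hx))
        · exact h ((hm1 a).mp hx)
      rw [fiberCard, heq, Finset.card_empty]
  have hsum : (∑ a : ZMod n, fiberCard f a ^ 2) = 2 * n := by
    have : ∀ a : ZMod n, fiberCard f a ^ 2 = 2 * fiberCard f a := by
      intro a
      rcases fib02 a with h | h <;> simp [h]
    calc ∑ a : ZMod n, fiberCard f a ^ 2 = ∑ a : ZMod n, 2 * fiberCard f a :=
          Finset.sum_congr rfl (fun a _ => this a)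
    _ = 2 * ∑ a : ZMod n, fiberCard f a := by rw [Finset.mul_sum]
    _ = 2 * n := by rw [sum_fiber f]
  refine ⟨f, hprop, hsum, ?_, bound⟩
  have hR : (∑ a : ZMod n, (fiberCard f a : ℝ) ^ 2) = 2 * n := by
    have := congrArg (fun k : ℕ => (k : ℝ)) hsum
    push_cast at this
    convert this using 2
  rw [hR]
  have hnR : (n : ℝ) ≠ 0 := Nat.cast_ne_zero.mpr hn0
  field_simp
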